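/- (Degeneration of the ordinary 2-soliton to a resonant soliton.) Suppose k_2 = k_3. Then for all (x,y,t): τ_2 = e^{θ_1+θ_2+θ_4} · [ (k_1−k_3) Δ e^{−θ_4} + (k_1−k_4) e^{−θ_2} + (k_2−k_4) e^{−θ_1} ], where Δ = exp(θ_3^0 − θ_2^0). Consequently, if in addition k_1 < k_2 = k_3 < k_4, then −τ_2 > 0 everywhere and 2 ∂²/∂x² [ log(−τ_2) ] = 2 ∂²/∂x² [ log( (k_3−k_1) Δ e^{−θ_4} + (k_4−k_1) e^{−θ_2} + (k_4−k_2) e^{−θ_1} ) ], i.e. the solution coincides with the one generated by a sum of three exponentials with positive coefficients. -/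

import Mathlib

lemma iteratedDeriv_two_linear_add (m b : ℝ) (g : ℝ → ℝ) (hg : Differentiable ℝ g) :
    iteratedDeriv 2 (fun x => m * x + b + g x) = iteratedDeriv 2 g := by
  have hd1 : deriv (fun x => m * x + b + g x) = fun x => m + deriv g x := by
    funext x
    have h : HasDerivAt (fun x => m * x + b + g x) (m + deriv g x) x := by
      have hl := ((hasDerivAt_id x).const_mul m).add_const b
      simpa [Pi.add_def] using hl.add (hg x).hasDerivAt
    exact h.deriv
  have e2 : ∀ f : ℝ → ℝ, iteratedDeriv 2 f = deriv (deriv f) := by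
    intro f
    rw [show (2:ℕ) = 0+1+1 from rfl, iteratedDeriv_succ, iteratedDeriv_succ, iteratedDeriv_zero]
  rw [e2, e2, hd1]
  funext x
  exact deriv_const_add _

theorem two_soliton_resonant_degeneration
    (k1 k2 k3 k4 θ10 θ20 θ30 θ40 : ℝ)
    (θ1 θ2 θ3 θ4 : ℝ → ℝ → ℝ → ℝ)
    (h1 : ∀ x y t, θ1 x y t = -k1 * x + k1 ^ 2 * y - k1 ^ 3 * t + θ10)
    (h2 : ∀ x y t, θ2 x y t = -k2 * x + k2 ^ 2 * y - k2 ^ 3 * t + θ20)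
    (h3 : ∀ x y t, θ3 x y t = -k3 * x + k3 ^ 2 * y - k3 ^ 3 * t + θ30)
    (h4 : ∀ x y t, θ4 x y t = -k4 * x + k4 ^ 2 * y - k4 ^ 3 * t + θ40)
    (τ2 : ℝ → ℝ → ℝ → ℝ)
    (hτ2 : ∀ x y t, τ2 x y t =
        (k1 - k3) * Real.exp (θ1 x y t + θ3 x y t) +
        (k1 - k4) * Real.exp (θ1 x y t + θ4 x y t) +
        (k2 - k3) * Real.exp (θ2 x y t + θ3 x y t) +
        (k2 - k4) * Real.exp (θ2 x y t + θ4 x y t))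
    (hk23 : k2 = k3) :
    (∀ x y t : ℝ, τ2 x y t =
        Real.exp (θ1 x y t + θ2 x y t + θ4 x y t) *
          ((k1 - k3) * Real.exp (θ30 - θ20) * Real.exp (-(θ4 x y t)) +
           (k1 - k4) * Real.exp (-(θ2 x y t)) +
           (k2 - k4) * Real.exp (-(θ1 x y t)))) ∧
    (k1 < k2 → k3 < k4 →
      (∀ x y t : ℝ, 0 < -τ2 x y t) ∧
      (∀ x y t : ℝ,
        2 * iteratedDeriv 2 (fun x' => Real.log (-τ2 x' y t)) x
          = 2 * iteratedDeriv 2 (fun x' => Real.log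
              ((k3 - k1) * Real.exp (θ30 - θ20) * Real.exp (-(θ4 x' y t)) +
               (k4 - k1) * Real.exp (-(θ2 x' y t)) +
               (k4 - k2) * Real.exp (-(θ1 x' y t)))) x)) := by
  subst hk23
  have fact : ∀ x y t : ℝ, τ2 x y t =
      Real.exp (θ1 x y t + θ2 x y t + θ4 x y t) *
        ((k1 - k2) * Real.exp (θ30 - θ20) * Real.exp (-(θ4 x y t)) +
         (k1 - k4) * Real.exp (-(θ2 x y t)) +
         (k2 - k4) * Real.exp (-(θ1 x y t))) := by
    intro x y t
    rw [hτ2, h1, h2, h3, h4]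
    simp only [neg_mul, Real.exp_add, Real.exp_sub, Real.exp_neg]
    field_simp
    ring
  refine ⟨fact, fun hk12 hk34 => ?_⟩
  -- the positive function appearing on the right
  set F : ℝ → ℝ → ℝ → ℝ := fun x y t =>
      (k2 - k1) * Real.exp (θ30 - θ20) * Real.exp (-(θ4 x y t)) +
      (k4 - k1) * Real.exp (-(θ2 x y t)) +
      (k4 - k2) * Real.exp (-(θ1 x y t)) with hF
  have hFpos : ∀ x y t : ℝ, 0 < F x y t := by
    intro x y t
    have e1 : (0:ℝ) < k2 - k1 := by linarith
    have e2 : (0:ℝ) < k4 - k1 := by linarith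
    have e3 : (0:ℝ) < k4 - k2 := by linarith
    have := Real.exp_pos (θ30 - θ20)
    have := Real.exp_pos (-(θ4 x y t))
    have := Real.exp_pos (-(θ2 x y t))
    have := Real.exp_pos (-(θ1 x y t))
    positivity
  have hneg : ∀ x y t : ℝ, -τ2 x y t =
      Real.exp (θ1 x y t + θ2 x y t + θ4 x y t) * F x y t := by
    intro x y t
    rw [fact x y t, hF]
    ring
  have hpos : ∀ x y t : ℝ, 0 < -τ2 x y t := by
    intro x y t
    rw [hneg x y t]
    exact mul_pos (Real.exp_pos _) (hFpos x y t)
  refine ⟨hpos, fun x y t => ?_⟩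
  -- rewrite the left function as a linear part plus log F
  have hFdiff : Differentiable ℝ (fun x' => F x' y t) := by
    have : (fun x' => F x' y t) = fun x' =>
        (k2 - k1) * Real.exp (θ30 - θ20) * Real.exp (k4 * x' - (k4 ^ 2 * y - k4 ^ 3 * t + θ40)) +
        (k4 - k1) * Real.exp (k2 * x' - (k2 ^ 2 * y - k2 ^ 3 * t + θ20)) +
        (k4 - k2) * Real.exp (k1 * x' - (k1 ^ 2 * y - k1 ^ 3 * t + θ10)) := by
      funext x'
      rw [hF]
      simp only [h1, h2, h4]
      ring_nf
    rw [this]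
    fun_prop
  have hg : Differentiable ℝ (fun x' => Real.log (F x' y t)) := by
    intro x'
    exact (hFdiff x').log (ne_of_gt (hFpos x' y t))
  have hfun : (fun x' => Real.log (-τ2 x' y t)) =
      fun x' => (-(k1 + k2 + k4)) * x' +
        ((k1 ^ 2 + k2 ^ 2 + k4 ^ 2) * y - (k1 ^ 3 + k2 ^ 3 + k4 ^ 3) * t + (θ10 + θ20 + θ40)) +
        Real.log (F x' y t) := by
    funext x'
    rw [hneg x' y t, Real.log_mul (Real.exp_ne_zero _) (ne_of_gt (hFpos x' y t)),
      Real.log_exp, h1, h2, h4]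
    ring
  have hrhs : (fun x' => Real.log
      ((k2 - k1) * Real.exp (θ30 - θ20) * Real.exp (-(θ4 x' y t)) +
       (k4 - k1) * Real.exp (-(θ2 x' y t)) +
       (k4 - k2) * Real.exp (-(θ1 x' y t)))) = fun x' => Real.log (F x' y t) := by
    funext x'
    rw [hF]
  rw [hfun, iteratedDeriv_two_linear_add _ _ _ hg, hrhs]
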